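/- Let T be a linear isomorphism of ℝ², let u, v be an orthonormal pair with T u ⟂ T v, and set a = max(‖T u‖, ‖T v‖), b = min(‖T u‖, ‖T v‖). Then for all unit vectors x, y in ℝ² with ⟪x, y⟫ = 0, one has a · b ≤ ‖T x‖ · ‖T y‖, and ‖T x‖ · ‖T y‖ ≤ (a² + b²)/2; i.e. among all pairs of orthogonal unit directions, the product of the length distortions is minimized at the principal tangents. -/

import Mathlib

open RealInnerProductSpace

lemma norm_sq_smul_add_smul' {E : Type*} [NormedAddCommGroup E] [InnerProductSpace ℝ E]
    (p q : E) (hpq : ⟪p, q⟫ = 0) (c s : ℝ) :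
    ‖c • p + s • q‖ ^ 2 = c ^ 2 * ‖p‖ ^ 2 + s ^ 2 * ‖q‖ ^ 2 := by
  rw [norm_add_sq_real, norm_smul, norm_smul, real_inner_smul_left, real_inner_smul_right, hpq]
  simp [mul_pow, sq_abs]

/-- Among all pairs of orthogonal unit directions, the product of the length
distortions under `T` is at least the product `a · b` of the semi-axes of the
Tissot indicatrix (attained at the principal tangents) and at most
`(a² + b²)/2`. -/
theorem tissot_product_distortion_bounds
    (T : EuclideanSpace ℝ (Fin 2) ≃L[ℝ] EuclideanSpace ℝ (Fin 2))
    (u v : EuclideanSpace ℝ (Fin 2))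
    (hu : ‖u‖ = 1) (hv : ‖v‖ = 1) (huv : ⟪u, v⟫ = 0) (hT : ⟪T u, T v⟫ = 0)
    (a b : ℝ) (ha : a = max ‖T u‖ ‖T v‖) (hb : b = min ‖T u‖ ‖T v‖) :
    ∀ x y : EuclideanSpace ℝ (Fin 2), ‖x‖ = 1 → ‖y‖ = 1 → ⟪x, y⟫ = 0 →
      a * b ≤ ‖T x‖ * ‖T y‖ ∧ ‖T x‖ * ‖T y‖ ≤ (a ^ 2 + b ^ 2) / 2 := by
  intro x y hx hy hxy
  have hvu : ⟪v, u⟫ = 0 := by rw [real_inner_comm]; exact huv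
  have hfam : Orthonormal ℝ ![u, v] := by
    rw [orthonormal_iff_ite]
    intro i j
    have huu : ⟪u, u⟫ = 1 := by rw [real_inner_self_eq_norm_sq, hu]; norm_num
    have hvv : ⟪v, v⟫ = 1 := by rw [real_inner_self_eq_norm_sq, hv]; norm_num
    fin_cases i <;> fin_cases j <;>
      simp only [Matrix.cons_val_zero, Matrix.cons_val_one, Matrix.head_cons,
        Fin.mk_zero, Fin.mk_one, reduceIte, Fin.zero_eta, Fin.mk_one] <;>
      first | exact huu | exact hvv | exact huv | exact hvu
  have hdecomp : ∀ z : EuclideanSpace ℝ (Fin 2), z = ⟪u, z⟫ • u + ⟪v, z⟫ • v := by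
    have hcard : Fintype.card (Fin 2) = Module.finrank ℝ (EuclideanSpace ℝ (Fin 2)) := by
      simp [finrank_euclideanSpace]
    let B0 : Module.Basis (Fin 2) ℝ (EuclideanSpace ℝ (Fin 2)) :=
      basisOfOrthonormalOfCardEqFinrank hfam hcard
    have hB0' : Orthonormal ℝ B0 := by
      rwa [coe_basisOfOrthonormalOfCardEqFinrank]
    let B := B0.toOrthonormalBasis hB0'
    have hBc : (B : Fin 2 → EuclideanSpace ℝ (Fin 2)) = ![u, v] := by
      simp only [B, B0]
      rw [Module.Basis.coe_toOrthonormalBasis, coe_basisOfOrthonormalOfCardEqFinrank]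
    intro z
    have h := B.sum_repr' z
    rw [Fin.sum_univ_two, congrFun hBc 0, congrFun hBc 1] at h
    simpa using h.symm
  clear hfam
  set c := ⟪u, x⟫ with hc
  set s := ⟪v, x⟫ with hs
  set c' := ⟪u, y⟫ with hc'
  set s' := ⟪v, y⟫ with hs'
  have hxdec := hdecomp x
  have hydec := hdecomp y
  have hTx : ‖T x‖ ^ 2 = c ^ 2 * ‖T u‖ ^ 2 + s ^ 2 * ‖T v‖ ^ 2 := by
    conv_lhs => rw [hxdec]
    rw [map_add, map_smul, map_smul]
    exact norm_sq_smul_add_smul' _ _ hT c s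
  have hTy : ‖T y‖ ^ 2 = c' ^ 2 * ‖T u‖ ^ 2 + s' ^ 2 * ‖T v‖ ^ 2 := by
    conv_lhs => rw [hydec]
    rw [map_add, map_smul, map_smul]
    exact norm_sq_smul_add_smul' _ _ hT c' s'
  have h1 : c ^ 2 + s ^ 2 = 1 := by
    have h := norm_sq_smul_add_smul' u v huv c s
    rw [← hxdec, hx, hu, hv] at h
    norm_num at h
    linarith
  have h2 : c' ^ 2 + s' ^ 2 = 1 := by
    have h := norm_sq_smul_add_smul' u v huv c' s'
    rw [← hydec, hy, hu, hv] at h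
    norm_num at h
    linarith
  have huu : ⟪u, u⟫ = 1 := by rw [real_inner_self_eq_norm_sq, hu]; norm_num
  have hvv : ⟪v, v⟫ = 1 := by rw [real_inner_self_eq_norm_sq, hv]; norm_num
  have h3 : c * c' + s * s' = 0 := by
    have h : ⟪x, y⟫ = c * c' + s * s' := by
      conv_lhs => rw [hxdec, hydec]
      simp only [inner_add_left, inner_add_right, real_inner_smul_left,
        real_inner_smul_right, huu, hvv, huv, hvu]
      ring
    rw [hxy] at h
    linarith
  have hc'2 : c' ^ 2 = s ^ 2 := by
    linear_combination (-(c' ^ 2)) * h1 + s ^ 2 * h2 + (c * c' - s * s') * h3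
  have hs'2 : s' ^ 2 = c ^ 2 := by
    linear_combination (-(s' ^ 2)) * h1 + c ^ 2 * h2 - (c * c' - s * s') * h3
  rw [hc'2, hs'2] at hTy
  clear hxdec hydec hdecomp hc'2 hs'2 h2 h3 hc hs hc' hs'
  clear_value c s c' s'
  clear c' s'
  have hab : a * b = ‖T u‖ * ‖T v‖ := by
    rcases le_total ‖T u‖ ‖T v‖ with h | h
    · rw [ha, hb, max_eq_right h, min_eq_left h]; ring
    · rw [ha, hb, max_eq_left h, min_eq_right h]
  have hab2 : a ^ 2 + b ^ 2 = ‖T u‖ ^ 2 + ‖T v‖ ^ 2 := by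
    rcases le_total ‖T u‖ ‖T v‖ with h | h
    · rw [ha, hb, max_eq_right h, min_eq_left h]; ring
    · rw [ha, hb, max_eq_left h, min_eq_right h]
  have ha0 : 0 ≤ a := ha ▸ le_max_of_le_left (norm_nonneg _)
  have hb0 : 0 ≤ b := hb ▸ le_min (norm_nonneg _) (norm_nonneg _)
  clear huu hvv hvu hxy huv hT hx hy
  constructor
  · have key : (a * b) ^ 2 ≤ (‖T x‖ * ‖T y‖) ^ 2 := by
      rw [hab, mul_pow, mul_pow, hTx, hTy]
      have hkey : (c ^ 2 * ‖T u‖ ^ 2 + s ^ 2 * ‖T v‖ ^ 2) *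
          (s ^ 2 * ‖T u‖ ^ 2 + c ^ 2 * ‖T v‖ ^ 2) =
          ‖T u‖ ^ 2 * ‖T v‖ ^ 2 + (c * s * (‖T u‖ ^ 2 - ‖T v‖ ^ 2)) ^ 2 := by
        linear_combination (‖T u‖ ^ 2 * ‖T v‖ ^ 2 * (c ^ 2 + s ^ 2 + 1)) * h1
      have := sq_nonneg (c * s * (‖T u‖ ^ 2 - ‖T v‖ ^ 2))
      linarith
    exact le_of_pow_le_pow_left₀ two_ne_zero
      (mul_nonneg (norm_nonneg _) (norm_nonneg _)) key
  · have hsum : ‖T x‖ ^ 2 + ‖T y‖ ^ 2 = a ^ 2 + b ^ 2 := by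
      rw [hab2, hTx, hTy]
      linear_combination (‖T u‖ ^ 2 + ‖T v‖ ^ 2) * h1
    have := sq_nonneg (‖T x‖ - ‖T y‖)
    nlinarith [this, hsum]
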